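/- Let Γ be a Conway 99-graph and let g be an automorphism of Γ of order 7. Then g fixes exactly one vertex of Γ; consequently every orbit of the cyclic group ⟨g⟩ on the vertex set, other than the singleton orbit of the fixed vertex, has exactly 7 elements. -/

import Mathlib

open Finset

section ConwayAux

variable {V : Type*} [Fintype V] [DecidableEq V] {G : SimpleGraph V} [DecidableRel G.Adj]

set_option linter.unusedSectionVars false

private lemma iso_pow_apply (g : G ≃g G) : ∀ (n : ℕ) (x : V), (g ^ n) x = (g.toEquiv ^ n) x
  | 0, _ => rfl
  | (n+1), x => by
    rw [pow_succ, pow_succ]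
    exact iso_pow_apply g n (g x)

private lemma card_fixed_mod (g : G ≃g G) (hg7 : g ^ 7 = 1) (S : Finset V)
    (hS : ∀ x ∈ S, g x ∈ S) :
    (S.filter fun x => g x = x).card % 7 = S.card % 7 := by
  have hiff : ∀ x, x ∈ S ↔ g x ∈ S := by
    intro x
    refine ⟨hS x, fun hx => ?_⟩
    obtain ⟨y, hy, hyx⟩ := Finset.surj_on_of_inj_on_of_card_le (s := S) (t := S)
      (fun a _ => g a) (fun a ha => hS a ha) (fun a b _ _ e => g.injective e) le_rfl (g x) hx
    have : y = x := g.injective hyx.symm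
    rwa [← this]
  set σ : Equiv.Perm V := g.toEquiv with hσ
  have hσapp : ∀ x, σ x = g x := fun _ => rfl
  have hiff' : ∀ x, x ∈ S ↔ σ x ∈ S := hiff
  set σ' : Equiv.Perm {x // x ∈ S} := σ.subtypePerm (fun x => (hiff' x).symm) with hσ'
  have hσ7 : σ ^ 7 = 1 := by
    ext x
    have := iso_pow_apply g 7 x
    rw [hg7] at this
    exact this.symm
  have hσ'7 : σ' ^ 7 = 1 := by
    rw [hσ', Equiv.Perm.subtypePerm_pow]
    ext x
    simp only [Equiv.Perm.subtypePerm_apply, hσ7]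
    rfl
  have hcards : (S.filter fun x => g x = x).card
      = (Finset.univ.filter fun x : {x // x ∈ S} => σ' x = x).card := by
    apply Finset.card_bij (fun (x : V) hx => (⟨x, (Finset.mem_filter.1 hx).1⟩ : {x // x ∈ S}))
    · intro a ha
      simp only [Finset.mem_filter, Finset.mem_univ, true_and]
      have := (Finset.mem_filter.1 ha).2
      simp [hσ', Equiv.Perm.subtypePerm_apply, Subtype.ext_iff, hσapp, this]
    · intro a ha b hb hab
      exact congrArg Subtype.val hab
    · intro b hb
      refine ⟨b.1, Finset.mem_filter.2 ⟨b.2, ?_⟩, rfl⟩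
      have := (Finset.mem_filter.1 hb).2
      rw [hσ', Equiv.Perm.subtypePerm_apply] at this
      have := congrArg Subtype.val this
      simpa [hσapp] using this
  rw [hcards]
  have hsplit := Finset.card_filter_add_card_filter_not
    (s := (Finset.univ : Finset {x // x ∈ S})) (p := fun x => σ' x = x)
  have huniv : (Finset.univ : Finset {x // x ∈ S}).card = S.card := by
    simp [Fintype.card_coe]
  by_cases h1 : σ' = 1
  · have : ∀ x : {x // x ∈ S}, σ' x = x := fun x => by rw [h1]; rfl
    rw [Finset.filter_true_of_mem (fun x _ => this x)] at hsplit ⊢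
    omega
  · have hord : orderOf σ' = 7 := by
      have hdvd : orderOf σ' ∣ 7 := orderOf_dvd_of_pow_eq_one hσ'7
      rcases (Nat.Prime.eq_one_or_self_of_dvd (by norm_num) _ hdvd) with h' | h'
      · exact absurd (orderOf_eq_one_iff.1 h') h1
      · exact h'
    obtain ⟨n, hn⟩ := Equiv.Perm.cycleType_prime_order (by rw [hord]; norm_num)
    have hsupp : σ'.support.card = (n+1) * 7 := by
      rw [← Equiv.Perm.sum_cycleType, hn, hord, Multiset.sum_replicate, smul_eq_mul]
    have hsupp' : σ'.support = Finset.univ.filter fun x => ¬ σ' x = x := by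
      ext x; simp [Equiv.Perm.mem_support]
    rw [← hsupp'] at hsplit
    omega

end ConwayAux

/-- An automorphism of order `7` of a Conway 99-graph fixes exactly one vertex,
and every orbit of the cyclic group it generates, other than the singleton orbit
of the fixed vertex, has exactly `7` elements. -/
theorem stmt_3 {V : Type*} [Fintype V] (G : SimpleGraph V) [DecidableRel G.Adj]
    (h : G.IsSRGWith 99 14 1 2)
    (g : G ≃g G) (hg : orderOf g = 7) :
    (∃! x : V, g x = x) ∧
      ∀ v : V, g v ≠ v → Set.ncard {w : V | ∃ n : ℤ, (g ^ n) v = w} = 7 := by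
  classical
  have hg7 : g ^ 7 = 1 := by rw [← hg]; exact pow_orderOf_eq_one g
  have hadj : ∀ {x y : V}, G.Adj x y → G.Adj (g x) (g y) := fun hxy => g.map_adj_iff.2 hxy
  set F : Finset V := Finset.univ.filter (fun x => g x = x) with hF
  have hmemF : ∀ x : V, x ∈ F ↔ g x = x := by intro x; simp [hF]
  -- common neighbor cardinalities
  have hcommon_card : ∀ u v : V, u ≠ v →
      (G.neighborFinset u ∩ G.neighborFinset v).card = if G.Adj u v then 1 else 2 := by
    intro u v huv
    have he : (G.neighborFinset u ∩ G.neighborFinset v) = (G.commonNeighbors u v).toFinset := by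
      ext w
      rw [Set.mem_toFinset]
      simp [SimpleGraph.commonNeighbors, SimpleGraph.mem_neighborFinset,
        SimpleGraph.mem_neighborSet]
    rw [he, Set.toFinset_card]
    split
    · exact h.of_adj u v ‹_›
    · exact h.of_not_adj huv ‹_›
  -- common neighbors of two fixed vertices are fixed
  have hfixmem : ∀ u v : V, g u = u → g v = v → u ≠ v →
      ∀ w ∈ G.neighborFinset u ∩ G.neighborFinset v, g w = w := by
    intro u v hu hv huv w hw
    set S := G.neighborFinset u ∩ G.neighborFinset v with hSdef
    have hcard : S.card ≤ 2 := by rw [hSdef, hcommon_card u v huv]; split <;> omega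
    have hclosed : ∀ z ∈ S, g z ∈ S := by
      intro z hz
      rw [hSdef, Finset.mem_inter, SimpleGraph.mem_neighborFinset,
        SimpleGraph.mem_neighborFinset] at hz ⊢
      exact ⟨by have := hadj hz.1; rwa [hu] at this, by have := hadj hz.2; rwa [hv] at this⟩
    have h2 : ∀ z ∈ S, g (g z) = z := by
      intro z hz
      by_cases hgz : g z = z
      · rw [hgz, hgz]
      · have hz1 : g z ∈ S := hclosed z hz
        have hz2 : g (g z) ∈ S := hclosed _ hz1
        have hpair : S = {z, g z} := by
          refine (Finset.eq_of_subset_of_card_le ?_ ?_).symm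
          · intro a ha
            rcases Finset.mem_insert.1 ha with rfl | ha'
            · exact hz
            · rwa [Finset.mem_singleton.1 ha']
          · rw [Finset.card_insert_of_notMem (by
              simp only [Finset.mem_singleton]
              exact fun e => hgz e.symm),
              Finset.card_singleton]
            exact hcard
        rw [hpair] at hz2
        rcases Finset.mem_insert.1 hz2 with h' | h'
        · exact h'
        · exact absurd (g.injective (Finset.mem_singleton.1 h')) hgz
    have e1 : g (g w) = w := h2 w hw
    have h7 : (g ^ 7) w = w := by rw [hg7]; rfl
    have hexp : g ^ 7 = g * (g * g) * (g * g) * (g * g) := by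
      rw [show (7:ℕ) = 1+2+2+2 from rfl, pow_add, pow_add, pow_add, pow_one, pow_two]
    rw [hexp] at h7
    have : (g * (g * g) * (g * g) * (g * g)) w = g w := by
      show g (g (g (g (g (g (g w)))))) = g w
      rw [e1, e1, e1]
    rwa [this] at h7
  -- neighborhoods of fixed vertices are invariant
  have hNinv : ∀ x : V, g x = x → ∀ w ∈ G.neighborFinset x, g w ∈ G.neighborFinset x := by
    intro x hx w hw
    rw [SimpleGraph.mem_neighborFinset] at hw ⊢
    have := hadj hw
    rwa [hx] at this
  have hdeg : ∀ x : V, (G.neighborFinset x).card = 14 := fun x => h.regular x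
  set f := F.card with hfdef
  -- f ≡ 1 mod 7
  have hf7 : f % 7 = 1 := by
    have := card_fixed_mod g hg7 Finset.univ (fun x _ => Finset.mem_univ _)
    have huniv : (Finset.univ : Finset V).card = 99 := by rw [Finset.card_univ, h.card]
    rw [huniv] at this
    exact this

  have hfle : f ≤ 99 := by
    rw [hfdef, ← h.card, ← Finset.card_univ]
    exact Finset.card_le_card (Finset.subset_univ F)
  -- degrees within F
  set D : V → ℕ := fun x => (G.neighborFinset x ∩ F).card with hD
  have hDmod : ∀ x ∈ F, D x % 7 = 14 % 7 := by
    intro x hx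
    have hx' := (hmemF x).1 hx
    have hmod := card_fixed_mod g hg7 (G.neighborFinset x) (hNinv x hx')
    have hfilter : (G.neighborFinset x).filter (fun w => g w = w)
        = G.neighborFinset x ∩ F := by
      ext w
      simp [hF, Finset.mem_inter, Finset.mem_filter]
    rw [hfilter, hdeg x] at hmod
    exact hmod
  have hDle : ∀ x, D x ≤ 14 := fun x =>
    le_trans (Finset.card_le_card Finset.inter_subset_left) (le_of_eq (hdeg x))
  have hD714 : 2 ≤ f → ∀ x ∈ F, D x = 7 ∨ D x = 14 := by
    intro hf2 x hx
    have hx' := (hmemF x).1 hx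
    obtain ⟨y, hy, hyx⟩ := Finset.exists_mem_ne (by omega : 1 < F.card) x
    have hy' := (hmemF y).1 hy
    have hpos : 0 < D x := by
      rw [hD]
      apply Finset.card_pos.2
      by_cases hxy : G.Adj x y
      · exact ⟨y, Finset.mem_inter.2 ⟨(SimpleGraph.mem_neighborFinset G x y).2 hxy, hy⟩⟩
      · have hc := hcommon_card x y (fun e => hyx e.symm)
        rw [if_neg hxy] at hc
        have hne : (G.neighborFinset x ∩ G.neighborFinset y).Nonempty :=
          Finset.card_pos.1 (by omega)
        obtain ⟨w, hw⟩ := hne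
        have hwF : w ∈ F := (hmemF w).2 (hfixmem x y hx' hy' (fun e => hyx e.symm) w hw)
        exact ⟨w, Finset.mem_inter.2 ⟨(Finset.mem_inter.1 hw).1, hwF⟩⟩
    have h1 := hDmod x hx
    have h2 := hDle x
    omega
  -- double counting
  set T : Finset (V × (V × V)) :=
    (F ×ˢ F.offDiag).filter (fun q => G.Adj q.1 q.2.1 ∧ G.Adj q.1 q.2.2) with hT
  have hI : T.card = ∑ x ∈ F, ((G.neighborFinset x ∩ F).offDiag).card := by
    rw [Finset.card_eq_sum_card_fiberwise (f := fun q => q.1) (t := F)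
      (fun q hq => (Finset.mem_product.1 (Finset.mem_filter.1 hq).1).1)]
    refine Finset.sum_congr rfl (fun x hx => ?_)
    have he : T.filter (fun q => q.1 = x) = {x} ×ˢ ((G.neighborFinset x ∩ F).offDiag) := by
      ext ⟨a, u, v⟩
      simp only [hT, Finset.mem_filter, Finset.mem_product, Finset.mem_offDiag,
        Finset.mem_singleton, Finset.mem_inter, SimpleGraph.mem_neighborFinset]
      constructor
      · rintro ⟨⟨⟨haF, hu, hv, huv⟩, hadj1, hadj2⟩, rfl⟩
        exact ⟨rfl, ⟨hadj1, hu⟩, ⟨hadj2, hv⟩, huv⟩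
      · rintro ⟨rfl, ⟨ha1, hu⟩, ⟨ha2, hv⟩, huv⟩
        exact ⟨⟨⟨hx, hu, hv, huv⟩, ha1, ha2⟩, rfl⟩
    rw [he, Finset.singleton_product, Finset.card_map]
  have hII : T.card = ∑ p ∈ F.offDiag,
      (G.neighborFinset p.1 ∩ G.neighborFinset p.2).card := by
    rw [Finset.card_eq_sum_card_fiberwise (f := fun q => q.2) (t := F.offDiag)
      (fun q hq => (Finset.mem_product.1 (Finset.mem_filter.1 hq).1).2)]
    refine Finset.sum_congr rfl (fun p hp => ?_)
    obtain ⟨hp1, hp2, hpne⟩ := Finset.mem_offDiag.1 hp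
    have hp1' := (hmemF p.1).1 hp1
    have hp2' := (hmemF p.2).1 hp2
    have he : T.filter (fun q => q.2 = p)
        = (G.neighborFinset p.1 ∩ G.neighborFinset p.2).map
          ⟨fun w => (w, p), fun a b e => congrArg Prod.fst e⟩ := by
      ext q
      simp only [hT, Finset.mem_filter, Finset.mem_product, Finset.mem_map,
        Function.Embedding.coeFn_mk]
      constructor
      · rintro ⟨⟨⟨hqF, hqoff⟩, hadj1, hadj2⟩, hq2⟩
        refine ⟨q.1, Finset.mem_inter.2 ⟨?_, ?_⟩, ?_⟩
        · rw [SimpleGraph.mem_neighborFinset]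
          rw [hq2] at hadj1
          exact hadj1.symm
        · rw [SimpleGraph.mem_neighborFinset]
          rw [hq2] at hadj2
          exact hadj2.symm
        · exact Prod.ext rfl hq2.symm
      · rintro ⟨w, hw, rfl⟩
        have hwmem := Finset.mem_inter.1 hw
        simp only [SimpleGraph.mem_neighborFinset] at hwmem
        have hwF : w ∈ F := (hmemF w).2 (hfixmem p.1 p.2 hp1' hp2' hpne w hw)
        exact ⟨⟨⟨hwF, hp⟩, hwmem.1.symm, hwmem.2.symm⟩, rfl⟩
    rw [he, Finset.card_map]
  have hIII : ∑ p ∈ F.offDiag, (G.neighborFinset p.1 ∩ G.neighborFinset p.2).card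
      + (F.offDiag.filter (fun p => G.Adj p.1 p.2)).card = 2 * F.offDiag.card := by
    rw [Finset.card_filter, ← Finset.sum_add_distrib]
    have : ∀ p ∈ F.offDiag, (G.neighborFinset p.1 ∩ G.neighborFinset p.2).card
        + (if G.Adj p.1 p.2 then 1 else 0) = 2 := by
      intro p hp
      obtain ⟨_, _, hpne⟩ := Finset.mem_offDiag.1 hp
      rw [hcommon_card p.1 p.2 hpne]
      split <;> omega
    rw [Finset.sum_congr rfl this, Finset.sum_const, smul_eq_mul, mul_comm]
  have hIV : (F.offDiag.filter (fun p => G.Adj p.1 p.2)).card = ∑ x ∈ F, D x := by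
    rw [Finset.card_eq_sum_card_fiberwise (f := fun p => p.1) (t := F)
      (fun p hp => (Finset.mem_offDiag.1 (Finset.mem_filter.1 hp).1).1)]
    refine Finset.sum_congr rfl (fun x hx => ?_)
    have he : (F.offDiag.filter (fun p => G.Adj p.1 p.2)).filter (fun p => p.1 = x)
        = (G.neighborFinset x ∩ F).map
          ⟨fun w => (x, w), fun a b e => congrArg Prod.snd e⟩ := by
      ext q
      simp only [Finset.mem_filter, Finset.mem_offDiag, Finset.mem_map, Finset.mem_inter,
        SimpleGraph.mem_neighborFinset, Function.Embedding.coeFn_mk]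
      constructor
      · rintro ⟨⟨⟨hq1, hq2, hqne⟩, hadj'⟩, hq1x⟩
        refine ⟨q.2, ⟨?_, hq2⟩, ?_⟩
        · rw [← hq1x]; exact hadj'
        · exact Prod.ext hq1x.symm rfl
      · rintro ⟨w, ⟨hadjw, hwF⟩, rfl⟩
        exact ⟨⟨⟨hx, hwF, hadjw.ne⟩, hadjw⟩, rfl⟩
    rw [he, Finset.card_map]
  have hsq : ∑ x ∈ F, D x * D x = 2 * (f * f - f) := by
    have e2 : ∑ x ∈ F, ((G.neighborFinset x ∩ F).offDiag).card
        = ∑ x ∈ F, (D x * D x - D x) :=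
      Finset.sum_congr rfl (fun x _ => by rw [Finset.offDiag_card])
    have key : ∑ x ∈ F, (D x * D x - D x) + ∑ x ∈ F, D x = 2 * (f * f - f) := by
      rw [← e2, ← hI, ← hIV, hII, ← Finset.offDiag_card]
      exact hIII
    have e3 : ∑ x ∈ F, (D x * D x - D x) + ∑ x ∈ F, D x = ∑ x ∈ F, D x * D x := by
      rw [← Finset.sum_add_distrib]
      refine Finset.sum_congr rfl (fun x _ => ?_)
      have : D x ≤ D x * D x := by
        cases Nat.eq_zero_or_pos (D x) with
        | inl h0 => simp [h0]
        | inr h0 => exact Nat.le_mul_of_pos_left _ h0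
      omega
    rw [← e3]
    exact key
  by_cases hf1 : f = 1
  case neg =>
    exfalso
    have hf2 : 2 ≤ f := by omega
    have hne99 : f ≠ 99 := by
      intro he
      have hFu : F = Finset.univ := Finset.eq_univ_of_card F (by rw [← hfdef, he, h.card])
      have hfix : ∀ x : V, g x = x := fun x => (hmemF x).1 (hFu ▸ Finset.mem_univ x)
      have hgid : g = 1 := by
        apply DFunLike.ext
        intro x
        exact hfix x
      rw [hgid, orderOf_one] at hg
      omega
    set b := (F.filter (fun x => D x = 14)).card with hbdef
    set a := (F.filter (fun x => ¬ D x = 14)).card with hadef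
    have hab : b + a = f := by
      rw [hbdef, hadef, hfdef]
      exact Finset.card_filter_add_card_filter_not _
    have hsum : ∑ x ∈ F, D x * D x = 196 * b + 49 * a := by
      rw [← Finset.sum_filter_add_sum_filter_not F (fun x => D x = 14)]
      congr 1
      · rw [Finset.sum_congr rfl (fun x hx => ?_), Finset.sum_const, smul_eq_mul, mul_comm]
        have := (Finset.mem_filter.1 hx).2
        rw [this]
      · rw [Finset.sum_congr rfl (fun x hx => ?_), Finset.sum_const, smul_eq_mul, mul_comm]
        obtain ⟨hxF, hx14⟩ := Finset.mem_filter.1 hx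
        rcases hD714 hf2 x hxF with h7' | h14'
        · rw [h7']
        · exact absurd h14' hx14
    rw [hsum] at hsq
    clear_value f a b
    interval_cases f <;> omega
  case pos =>
    obtain ⟨x0, hx0⟩ := Finset.card_eq_one.1 (hfdef ▸ hf1)
    constructor
    · refine ⟨x0, ?_, ?_⟩
      · exact (hmemF x0).1 (hx0 ▸ Finset.mem_singleton_self x0)
      · intro y hy
        have : y ∈ F := (hmemF y).2 hy
        rw [hx0] at this
        exact Finset.mem_singleton.1 this
    · intro v hv
      have hfix_iter : ∀ k : ℕ, 0 < k → k < 7 → (g ^ k) v ≠ v := by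
        intro k hk0 hk7 hkv
        have hs : ∃ s, (k * s) % 7 = 1 := by
          interval_cases k
          exacts [⟨1, by norm_num⟩, ⟨4, by norm_num⟩, ⟨5, by norm_num⟩,
            ⟨2, by norm_num⟩, ⟨3, by norm_num⟩, ⟨6, by norm_num⟩]
        obtain ⟨s, hs⟩ := hs
        have hiter : ∀ m : ℕ, ((g ^ k) ^ m) v = v := by
          intro m
          induction m with
          | zero => rfl
          | succ m ih =>
            rw [pow_succ]
            show ((g ^ k) ^ m) ((g ^ k) v) = v
            rw [hkv]
            exact ih
        have h1 : (g ^ (k * s)) v = v := by rw [pow_mul]; exact hiter s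
        obtain ⟨q, hq⟩ : ∃ q, k * s = 7 * q + 1 := ⟨k * s / 7, by omega⟩
        rw [hq, pow_add, pow_mul, hg7, one_pow, pow_one, one_mul] at h1
        exact hv h1
      have hinj : ∀ i j : ℕ, i < 7 → j < 7 → (g ^ i) v = (g ^ j) v → i = j := by
        have key : ∀ i j : ℕ, i < j → j < 7 → (g ^ i) v = (g ^ j) v → False := by
          intro i j hij hj7 he
          have e1 : (g ^ i) ((g ^ (j - i)) v) = (g ^ j) v := by
            have hm : g ^ i * g ^ (j - i) = g ^ j := by
              rw [← pow_add]
              congr 1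
              omega
            rw [← hm]
            rfl
          rw [← e1] at he
          have := (g ^ i).injective he
          exact hfix_iter (j - i) (by omega) (by omega) this.symm
        intro i j hi hj he
        rcases Nat.lt_trichotomy i j with h' | h' | h'
        · exact absurd (key i j h' hj he) (fun x => x)
        · exact h'
        · exact absurd (key j i h' hi he.symm) (fun x => x)
      have hst : {w : V | ∃ n : ℤ, (g ^ n) v = w}
          = ↑(Finset.image (fun i : Fin 7 => (g ^ (i : ℕ)) v) Finset.univ) := by
        ext w
        constructor
        · rintro ⟨n, rfl⟩
          have h0 : (0 : ℤ) ≤ n % 7 := Int.emod_nonneg n (by norm_num)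
          have h7' : n % 7 < 7 := Int.emod_lt_of_pos n (by norm_num)
          refine Finset.mem_coe.2 (Finset.mem_image.2
            ⟨⟨(n % 7).toNat, by omega⟩, Finset.mem_univ _, ?_⟩)
          have hz : g ^ (((n % 7).toNat : ℤ)) = g ^ n := by
            rw [Int.toNat_of_nonneg h0]
            calc g ^ (n % 7) = g ^ (n % (orderOf g : ℤ)) := by rw [hg]; norm_num
              _ = g ^ n := zpow_mod_orderOf g n
          show (g ^ ((n % 7).toNat)) v = (g ^ n) v
          rw [← zpow_natCast g (n % 7).toNat, hz]
        · intro hw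
          obtain ⟨i, _, rfl⟩ := Finset.mem_image.1 (Finset.mem_coe.1 hw)
          exact ⟨(i : ℕ), by rw [zpow_natCast]⟩
      rw [hst, Set.ncard_coe_finset,
        Finset.card_image_of_injective _ (fun i j e => Fin.ext (hinj i j i.isLt j.isLt e)),
        Finset.card_univ, Fintype.card_fin]
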